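/- Let e be a real random variable with E[e] = 0, E[e²] = 1, E[e⁴] < ∞, and suppose Δ := E[e⁴] − (E[e³])² − 1 ≠ 0. Let h : ℝ → ℝ be measurable with E[h(e)²] < ∞, write μ₃ = E[e³], and define h₀(z) = h(z) − E[h(e)] − z E[e h(e)] − ((z² − μ₃ z − 1)/Δ)·(E[e² h(e)] − μ₃ E[e h(e)] − E[h(e)]). Then E[h₀(e)] = 0, E[e h₀(e)] = 0 and E[e² h₀(e)] = 0; that is, h₀ belongs to the tangent set 𝒮. -/

import Mathlib

open MeasureTheory

/-- For `e` with `E[e] = 0`, `E[e²] = 1`, `E[e⁴] < ∞` and `Δ = E[e⁴] − (E[e³])² − 1 ≠ 0`, and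
`h` with `E[h(e)²] < ∞`, the projection
`h₀(z) = h(z) − E[h(e)] − z E[e h(e)] − ((z² − μ₃ z − 1)/Δ)(E[e² h(e)] − μ₃ E[e h(e)] − E[h(e)])`
satisfies `E[h₀(e)] = 0`, `E[e h₀(e)] = 0` and `E[e² h₀(e)] = 0`, i.e. `h₀ ∈ 𝒮`. -/
theorem projection_mem_tangent_set
    {Ω : Type*} [MeasurableSpace Ω] (P : Measure Ω) [IsProbabilityMeasure P]
    (e : Ω → ℝ) (he : Measurable e)
    (h4 : Integrable (fun ω => (e ω) ^ 4) P)
    (hmean : ∫ ω, e ω ∂P = 0) (hvar : ∫ ω, (e ω) ^ 2 ∂P = 1)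
    (μ₃ Δ : ℝ) (hμ₃ : μ₃ = ∫ ω, (e ω) ^ 3 ∂P)
    (hΔ : Δ = (∫ ω, (e ω) ^ 4 ∂P) - μ₃ ^ 2 - 1) (hΔ0 : Δ ≠ 0)
    (h : ℝ → ℝ) (hh : Measurable h)
    (hh2 : Integrable (fun ω => (h (e ω)) ^ 2) P)
    (h₀ : ℝ → ℝ)
    (hh₀ : ∀ z, h₀ z = h z - (∫ ω, h (e ω) ∂P) - z * (∫ ω, e ω * h (e ω) ∂P)
      - ((z ^ 2 - μ₃ * z - 1) / Δ) *
        ((∫ ω, (e ω) ^ 2 * h (e ω) ∂P) - μ₃ * (∫ ω, e ω * h (e ω) ∂P) - (∫ ω, h (e ω) ∂P))) :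
    (∫ ω, h₀ (e ω) ∂P = 0) ∧ (∫ ω, e ω * h₀ (e ω) ∂P = 0) ∧
    (∫ ω, (e ω) ^ 2 * h₀ (e ω) ∂P = 0) := by
  -- dominating function
  have hdom : Integrable (fun ω => 1 + (e ω) ^ 4 + (h (e ω)) ^ 2) P :=
    ((integrable_const 1).add h4).add hh2
  have hdom_bound : ∀ ω, (0:ℝ) ≤ 1 + (e ω) ^ 4 + (h (e ω)) ^ 2 := by
    intro ω; positivity
  have asm : ∀ (f : ℝ → ℝ), Measurable f →
      AEStronglyMeasurable (fun ω => f (e ω)) P := fun f hf =>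
    (hf.comp he).aestronglyMeasurable
  have mono' : ∀ (f : ℝ → ℝ), Measurable f →
      (∀ x : ℝ, |f x| ≤ 1 + x ^ 4 + (h x) ^ 2) →
      Integrable (fun ω => f (e ω)) P := by
    intro f hf hb
    refine hdom.mono (asm f hf) (Filter.Eventually.of_forall fun ω => ?_)
    have := hb (e ω)
    simpa [Real.norm_eq_abs, abs_of_nonneg (hdom_bound ω)] using this
  have ie1 : Integrable e P := by
    have := mono' (fun x => x) measurable_id (fun x => by
      nlinarith [abs_nonneg x, sq_abs x, sq_nonneg (|x| ^ 2 - 1), sq_nonneg (|x| - 1),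
        sq_nonneg (h x)])
    simpa using this
  have ie2 : Integrable (fun ω => (e ω) ^ 2) P :=
    mono' (fun x => x ^ 2) (measurable_id.pow_const 2) (fun x => by
      nlinarith [sq_nonneg (x ^ 2 - 1), sq_nonneg (h x), abs_sq x])
  have ie3 : Integrable (fun ω => (e ω) ^ 3) P :=
    mono' (fun x => x ^ 3) (measurable_id.pow_const 3) (fun x => by
      have h1 : |x ^ 3| = |x| ^ 3 := by rw [abs_pow]
      nlinarith [abs_nonneg x, sq_abs x, sq_nonneg (|x| ^ 2 - |x|), sq_nonneg (|x| - 1),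
        sq_nonneg (h x)])
  have ih : Integrable (fun ω => h (e ω)) P :=
    mono' h hh (fun x => by
      nlinarith [sq_nonneg (|h x| - 1), abs_nonneg (h x), sq_abs (h x), sq_nonneg x,
        sq_nonneg (x ^ 2)])
  have ieh : Integrable (fun ω => e ω * h (e ω)) P :=
    mono' (fun x => x * h x) (measurable_id.mul hh) (fun x => by
      have h1 : |x * h x| = |x| * |h x| := abs_mul _ _
      nlinarith [sq_nonneg (|x| - |h x|), sq_abs x, sq_abs (h x), abs_nonneg x,
        abs_nonneg (h x), sq_nonneg (|x| ^ 2 - 1), sq_nonneg (x ^ 2)])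
  have ie2h : Integrable (fun ω => (e ω) ^ 2 * h (e ω)) P :=
    mono' (fun x => x ^ 2 * h x) ((measurable_id.pow_const 2).mul hh) (fun x => by
      have h1 : |x ^ 2 * h x| = x ^ 2 * |h x| := by
        rw [abs_mul, abs_of_nonneg (sq_nonneg x)]
      nlinarith [sq_nonneg (x ^ 2 - |h x|), sq_abs (h x), abs_nonneg (h x)])
  set A := ∫ ω, h (e ω) ∂P with hA
  set B := ∫ ω, e ω * h (e ω) ∂P with hB
  set C := (∫ ω, (e ω) ^ 2 * h (e ω) ∂P) - μ₃ * B - A with hC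
  set k := C / Δ with hk
  have hCk : k * Δ = C := by rw [hk]; field_simp [hk]
  have hE2h : ∫ ω, (e ω) ^ 2 * h (e ω) ∂P = C + μ₃ * B + A := by rw [hC]; ring
  -- generic computation
  have key : ∀ (g : Ω → ℝ), Integrable g P → ∀ a b c : ℝ,
      ∫ ω, (g ω + a + b * e ω + c * (e ω) ^ 2) ∂P
        = (∫ ω, g ω ∂P) + a + b * (∫ ω, e ω ∂P) + c * (∫ ω, (e ω) ^ 2 ∂P) := by
    intro g hg a b c
    have i1 : Integrable (fun ω => g ω + a) P := by exact hg.add (integrable_const a)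
    have i2 : Integrable (fun ω => g ω + a + b * e ω) P := by exact i1.add (ie1.const_mul b)
    rw [integral_add i2 (ie2.const_mul c), integral_add i1 (ie1.const_mul b),
      integral_add hg (integrable_const a),
      integral_const_mul, integral_const_mul, integral_const]
    simp
  have key3 : ∀ (g : Ω → ℝ), Integrable g P → ∀ b c : ℝ,
      ∫ ω, (g ω + b * (e ω) ^ 3 + c * (e ω) ^ 4) ∂P
        = (∫ ω, g ω ∂P) + b * (∫ ω, (e ω) ^ 3 ∂P) + c * (∫ ω, (e ω) ^ 4 ∂P) := by
    intro g hg b c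
    have i1 : Integrable (fun ω => g ω + b * (e ω) ^ 3) P := by exact hg.add (ie3.const_mul b)
    rw [integral_add i1 (h4.const_mul c), integral_add hg (ie3.const_mul b),
      integral_const_mul, integral_const_mul]
  refine ⟨?_, ?_, ?_⟩
  · have heq : (fun ω => h₀ (e ω))
        = fun ω => h (e ω) + (k - A) + (k * μ₃ - B) * e ω + (-k) * (e ω) ^ 2 := by
      funext ω; rw [hh₀, hk]; field_simp [hk, hC]; ring
    rw [heq, key _ ih, hmean, hvar, ← hA]
    ring
  · have heq : (fun ω => e ω * h₀ (e ω))
        = fun ω => e ω * h (e ω) + 0 + (k - A) * e ω + ((k * μ₃ - B) + 0) * (e ω) ^ 2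
            + (-k) * (e ω) ^ 3 + 0 * (e ω) ^ 4 := by
      funext ω; rw [hh₀, hk]; field_simp [hk, hC]; ring
    have ig : Integrable (fun ω => e ω * h (e ω) + 0 + (k - A) * e ω
        + (k * μ₃ - B + 0) * (e ω) ^ 2) P := by
      exact ((ieh.add (integrable_const 0)).add (ie1.const_mul _)).add (ie2.const_mul _)
    rw [heq, key3 _ ig, key _ ieh, hmean, hvar, ← hμ₃, ← hB]
    ring
  · have heq : (fun ω => (e ω) ^ 2 * h₀ (e ω))
        = fun ω => (e ω) ^ 2 * h (e ω) + 0 + 0 * e ω + ((k - A) + 0) * (e ω) ^ 2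
            + (k * μ₃ - B) * (e ω) ^ 3 + (-k) * (e ω) ^ 4 := by
      funext ω; rw [hh₀, hk]; field_simp [hk, hC]; ring
    have ig : Integrable (fun ω => (e ω) ^ 2 * h (e ω) + 0 + 0 * e ω
        + (k - A + 0) * (e ω) ^ 2) P := by
      exact ((ie2h.add (integrable_const 0)).add (ie1.const_mul _)).add (ie2.const_mul _)
    rw [heq, key3 _ ig, key _ ie2h, hmean, hvar, ← hμ₃, hE2h]
    have h4val : ∫ ω, (e ω) ^ 4 ∂P = Δ + μ₃ ^ 2 + 1 := by rw [hΔ]; ring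
    rw [h4val]
    nlinarith [hCk]
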